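/- For every n ≥ 4, the graph B_{n,P3} from Construction 1 satisfies ι(B_{n,P3}, P3) = ⌊n/4⌋. -/

import Mathlib

open SimpleGraph

/-- `G` contains a copy of the 3-vertex path as a (not necessarily induced) subgraph. -/
def containsP3 {V : Type*} (G : SimpleGraph V) : Prop :=
  ∃ f : Fin 3 → V, Function.Injective f ∧
    ∀ a b, (SimpleGraph.pathGraph 3).Adj a b → G.Adj (f a) (f b)

/-- The closed neighbourhood `N[D]` of a set of vertices `D`. -/
def closedNbhd {V : Type*} (G : SimpleGraph V) (D : Set V) : Set V :=
  {v | v ∈ D ∨ ∃ d ∈ D, G.Adj d v}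

/-- `D` is a `P3`-isolating set of `G`: `G - N[D]` contains no copy of `P3`. -/
def IsP3Isolating {V : Type*} (G : SimpleGraph V) (D : Set V) : Prop :=
  ¬ containsP3 (G.induce (closedNbhd G D)ᶜ)

/-- The `P3`-isolation number `ι(G, P3)`. -/
noncomputable def iotaP3 {V : Type*} (G : SimpleGraph V) : ℕ :=
  sInf {n | ∃ D : Finset V, D.card = n ∧ IsP3Isolating G ↑D}

/-- The graph `B_{n,P3}` of Construction 1 for `n ≥ 4`: a path on `⌊n/4⌋` vertices, `n % 4`
extra vertices joined to the last path vertex, and `⌊n/4⌋` disjoint copies of `P3`, each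
vertex of the `i`-th copy joined to the `i`-th path vertex. -/
def Bgraph (n : ℕ) :
    SimpleGraph (Fin (n / 4) ⊕ Fin (n % 4) ⊕ (Fin (n / 4) × Fin 3)) :=
  SimpleGraph.fromRel (fun u v =>
    match u, v with
    | .inl i, .inl j => j.val = i.val + 1
    | .inl i, .inr (.inl _) => i.val = n / 4 - 1
    | .inl i, .inr (.inr (j, _)) => i = j
    | .inr (.inr (i, p)), .inr (.inr (j, q)) => i = j ∧ q.val = p.val + 1
    | _, _ => False)

/-- For every `n ≥ 4`, `ι(B_{n,P3}, P3) = ⌊n/4⌋`. -/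
theorem stmt7 (n : ℕ) (hn : 4 ≤ n) : iotaP3 (Bgraph n) = n / 4 := by
  have hN : 1 ≤ n / 4 := (Nat.one_le_div_iff (by norm_num)).mpr hn
  have hmem : (n / 4) ∈ {k | ∃ D : Finset (Fin (n / 4) ⊕ Fin (n % 4) ⊕ (Fin (n / 4) × Fin 3)),
      D.card = k ∧ IsP3Isolating (Bgraph n) ↑D} := by
    refine ⟨Finset.univ.map ⟨Sum.inl, Sum.inl_injective⟩, by simp, ?_⟩
    rintro ⟨f, hinj, hadj⟩
    have hv := (f 0).2
    apply hv
    rcases hv' : (f 0).1 with i | j | ⟨j, p⟩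
    · left; simp [hv']
    · right
      refine ⟨Sum.inl ⟨n / 4 - 1, Nat.sub_lt hN one_pos⟩, by simp, ?_⟩
      simp [Bgraph]
    · right
      refine ⟨Sum.inl j, by simp, ?_⟩
      simp [Bgraph]
  refine Nat.le_antisymm (Nat.sInf_le hmem) (le_csInf ⟨_, hmem⟩ ?_)
  rintro k ⟨D, rfl, hiso⟩
  have hclaim : ∀ i : Fin (n / 4), ∃ d ∈ D,
      d = Sum.inl i ∨ ∃ p : Fin 3, d = Sum.inr (Sum.inr (i, p)) := by
    intro i
    by_contra hcon
    push_neg at hcon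
    apply hiso
    have hnb : ∀ p : Fin 3,
        (Sum.inr (Sum.inr (i, p)) : Fin (n / 4) ⊕ Fin (n % 4) ⊕ (Fin (n / 4) × Fin 3)) ∈
          (closedNbhd (Bgraph n) ↑D)ᶜ := by
      intro p
      intro hmem2
      rcases hmem2 with h | ⟨d, hd, hadj⟩
      · exact (hcon _ h).2 p rfl
      · have : d = Sum.inl i ∨ ∃ q, d = Sum.inr (Sum.inr (i, q)) := by
          rcases d with i' | j' | ⟨i', q⟩ <;>
            simp only [Bgraph, SimpleGraph.fromRel_adj] at hadj <;>
            rcases hadj with ⟨hne, h | h⟩ <;> simp_all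
        rcases this with rfl | ⟨q, rfl⟩
        · exact (hcon _ hd).1 rfl
        · exact (hcon _ hd).2 q rfl
    refine ⟨fun p => ⟨Sum.inr (Sum.inr (i, p)), hnb p⟩, ?_, ?_⟩
    · intro a b hab
      simpa using congrArg Subtype.val hab
    · intro a b hab
      rw [SimpleGraph.pathGraph_adj] at hab
      show (Bgraph n).Adj _ _
      rcases hab with h | h <;>
        show (Bgraph n).Adj (Sum.inr (Sum.inr (i, a))) (Sum.inr (Sum.inr (i, b))) <;>
        simp [Bgraph] <;> omega
  have hg : ∀ i : Fin (n / 4), ∃ d : {x // x ∈ D}, d.val = Sum.inl i ∨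
      ∃ p : Fin 3, d.val = Sum.inr (Sum.inr (i, p)) := by
    intro i; obtain ⟨d, hd, h⟩ := hclaim i; exact ⟨⟨d, hd⟩, h⟩
  choose g hgspec using hg
  have ginj : Function.Injective g := by
    intro i j hij
    have hval : (g i).val = (g j).val := congrArg Subtype.val hij
    rcases hgspec i with h1 | ⟨p, h1⟩ <;> rcases hgspec j with h2 | ⟨q, h2⟩ <;>
      rw [h1, h2] at hval <;> simp_all
  calc n / 4 = Fintype.card (Fin (n / 4)) := by simp
    _ ≤ Fintype.card D := Fintype.card_le_of_injective g ginj
    _ = D.card := Fintype.card_coe D
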